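/- Let (a,b,H) ∈ S, let M = [[a,b],[0,1]] ∈ AGL(1,F_q), and let H̄ = {[[1,h],[0,1]] : h ∈ H}, a subgroup of AGL(1,F_q). Then S(a,b,H) is the internal semidirect product of the cyclic subgroup ⟨M⟩ with H̄: H̄ is a normal subgroup of S(a,b,H), ⟨M⟩ ∩ H̄ is trivial, and every element of S(a,b,H) is a product of an element of ⟨M⟩ and an element of H̄; in particular |S(a,b,H)| = ord(a) · |H|, where ord(a) is the multiplicative order of a in F_q^*. -/

import Mathlib

open Matrix
open scoped Classical

abbrev GL2 (F : Type) [Field F] := GL (Fin 2) F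

/-- `AGL(1,F)`: the subgroup of `GL(2,F)` of matrices of the form `[[a,b],[0,1]]`. -/
def AGL (F : Type) [Field F] : Subgroup (GL2 F) where
  carrier := {g | (g : Matrix (Fin 2) (Fin 2) F) 1 0 = 0 ∧
                  (g : Matrix (Fin 2) (Fin 2) F) 1 1 = 1}
  one_mem' := by
    constructor <;> simp [Matrix.one_apply]
  mul_mem' := by
    rintro a b ⟨ha0, ha1⟩ ⟨hb0, hb1⟩
    constructor <;>
      simp [Units.val_mul, Matrix.mul_apply, Fin.sum_univ_two, ha0, ha1, hb0, hb1]
  inv_mem' := by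
    rintro g ⟨h0, h1⟩
    have hdet : ((g : Matrix (Fin 2) (Fin 2) F) 0 0) ≠ 0 := by
      have hu : IsUnit ((g : Matrix (Fin 2) (Fin 2) F).det) :=
        (Matrix.isUnit_iff_isUnit_det _).1 g.isUnit
      rw [Matrix.det_fin_two, h0, h1] at hu
      simpa using hu.ne_zero
    have hinv : ((g⁻¹ : GL2 F) : Matrix (Fin 2) (Fin 2) F)
        = ((g : Matrix (Fin 2) (Fin 2) F))⁻¹ := Matrix.coe_units_inv g
    constructor <;>
      simp [hinv, Matrix.inv_def, Matrix.adjugate_fin_two, Matrix.det_fin_two,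
        h0, h1, hdet]

/-- Membership of a triple `(a,b,H)` in the set `𝒮`: `a ∈ F*`, `H` is an additive
subgroup of `F` closed under multiplication by the subfield `F_p(a)` generated by `a`,
and `b = 0` when `a = 1`. -/
def memS {F : Type} [Field F] (a b : F) (H : AddSubgroup F) : Prop :=
  a ≠ 0 ∧ (a = 1 → b = 0) ∧ ∀ x ∈ Subfield.closure {a}, ∀ h ∈ H, x * h ∈ H

/-- `S(a,b,H)`: the subgroup of `GL(2,F)` generated by the matrix `[[a,b],[0,1]]`
together with the matrices `[[1,h],[0,1]]`, `h ∈ H`. -/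
def Sgrp {F : Type} [Field F] (a b : F) (H : AddSubgroup F) : Subgroup (GL2 F) :=
  Subgroup.closure {g : GL2 F |
    (g : Matrix (Fin 2) (Fin 2) F) = !![a, b; 0, 1] ∨
    ∃ h ∈ H, (g : Matrix (Fin 2) (Fin 2) F) = !![1, h; 0, 1]}

/-- `pPow p d` is `p(d)`: the smallest (positive) power of `p` that is `≡ 1 (mod d)`. -/
noncomputable def pPow (p d : ℕ) : ℕ := sInf {m | (∃ k : ℕ, 1 ≤ k ∧ m = p ^ k) ∧ m % d = 1 % d}


section Aux
variable {F : Type} [Field F]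

lemma mulmat (x y c d : F) : !![x,y;0,1] * !![c,d;0,1] = !![x*c, x*d+y;0,1] := by
  rw [Matrix.mul_fin_two]; ring_nf

/-- the unipotent matrix [[1,h],[0,1]] as a unit -/
def uu (h : F) : GL2 F :=
  ⟨!![1,h;0,1], !![1,-h;0,1],
    by rw [mulmat]; simp [Matrix.one_fin_two],
    by rw [mulmat]; simp [Matrix.one_fin_two]⟩

@[simp] lemma uu_coe (h : F) : ((uu h : GL2 F) : Matrix (Fin 2) (Fin 2) F) = !![1,h;0,1] := rfl

lemma GL2_ext {g g' : GL2 F} (h : (g : Matrix (Fin 2) (Fin 2) F) = (g' : Matrix (Fin 2) (Fin 2) F)) : g = g' := Units.ext h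

lemma uu_mul (h h' : F) : uu h * uu h' = uu (h + h') := by
  apply GL2_ext
  rw [Units.val_mul, uu_coe, uu_coe, uu_coe, mulmat]
  ring_nf

@[simp] lemma uu_zero : (uu 0 : GL2 F) = 1 := by
  apply GL2_ext; simp [Matrix.one_fin_two]

lemma uu_inv (h : F) : (uu h)⁻¹ = uu (-h) := by
  apply GL2_ext; rfl

lemma uu_inj {h h' : F} (e : (uu h : GL2 F) = uu h') : h = h' := by
  have := congrArg (fun g : GL2 F => (g : Matrix (Fin 2) (Fin 2) F) 0 1) e
  simpa using this

lemma entry00 {x y c d : F} (e : !![x,y;(0:F),1] = !![c,d;0,1]) : x = c := by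
  have := congrArg (fun m : Matrix (Fin 2) (Fin 2) F => m 0 0) e
  simpa using this

lemma entry01 {x y c d : F} (e : !![x,y;(0:F),1] = !![c,d;0,1]) : y = d := by
  have := congrArg (fun m : Matrix (Fin 2) (Fin 2) F => m 0 1) e
  simpa using this

variable {a b : F} {M : GL2 F}

lemma M_inv_coe (ha : a ≠ 0) (hM : (M : Matrix (Fin 2) (Fin 2) F) = !![a, b; 0, 1]) :
    ((M⁻¹ : GL2 F) : Matrix (Fin 2) (Fin 2) F) = !![a⁻¹, -(a⁻¹*b); 0, 1] := by
  have hN : M = (⟨!![a,b;0,1], !![a⁻¹, -(a⁻¹*b);0,1],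
      by rw [mulmat, show a * -(a⁻¹*b) + b = 0 by field_simp; ring,
           mul_inv_cancel₀ ha, Matrix.one_fin_two],
      by rw [mulmat, show a⁻¹*b + -(a⁻¹*b) = 0 by ring,
           inv_mul_cancel₀ ha, Matrix.one_fin_two]⟩ : GL2 F) := GL2_ext hM
  rw [hN]; rfl

lemma M_zpow (ha : a ≠ 0) (hM : (M : Matrix (Fin 2) (Fin 2) F) = !![a, b; 0, 1]) (k : ℤ) :
    ∃ d : F, ((M ^ k : GL2 F) : Matrix (Fin 2) (Fin 2) F) = !![a ^ k, d; 0, 1] ∧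
      (a - 1) * d = (a ^ k - 1) * b := by
  induction k using Int.induction_on with
  | zero => exact ⟨0, by simp [Matrix.one_fin_two]⟩
  | succ n ih =>
      obtain ⟨d, hd, hrel⟩ := ih
      refine ⟨a ^ (n:ℤ) * b + d, ?_, ?_⟩
      · rw [_root_.zpow_add_one, Units.val_mul, hd, hM, mulmat, zpow_add_one₀ ha]
      · rw [zpow_add_one₀ ha]; linear_combination hrel
  | pred n ih =>
      obtain ⟨d, hd, hrel⟩ := ih
      have h1 : a ^ (-(n:ℤ)-1) * a = a ^ (-(n:ℤ)) := by
        rw [← zpow_add_one₀ ha]; congr 1; ring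
      have h2 : a ^ (-(n:ℤ)) * a⁻¹ = a ^ (-(n:ℤ)-1) := (zpow_sub_one₀ ha _).symm
      refine ⟨a ^ (-(n:ℤ)) * (-(a⁻¹*b)) + d, ?_, ?_⟩
      · rw [_root_.zpow_sub_one, Units.val_mul, hd, M_inv_coe ha hM, mulmat, ← zpow_sub_one₀ ha]
      · linear_combination hrel - (a-1)*b*h2 - b*h1

lemma M_zpow_eq_one (ha : a ≠ 0) (hb : a = 1 → b = 0)
    (hM : (M : Matrix (Fin 2) (Fin 2) F) = !![a, b; 0, 1])
    {k : ℤ} (hk : a ^ k = 1) : M ^ k = 1 := by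
  by_cases h1 : a = 1
  · have hM1 : M = 1 := GL2_ext (by rw [hM, h1, hb h1, Units.val_one, Matrix.one_fin_two])
    simp [hM1]
  · obtain ⟨d, hd, hrel⟩ := M_zpow ha hM k
    rw [hk] at hrel hd
    have hd0 : d = 0 := by
      rcases (by simpa using hrel : a - 1 = 0 ∨ d = 0) with h|h
      · exact absurd (sub_eq_zero.mp h) h1
      · exact h
    exact GL2_ext (by rw [hd, hd0, Units.val_one, Matrix.one_fin_two])

lemma M_conj (ha : a ≠ 0) (hM : (M : Matrix (Fin 2) (Fin 2) F) = !![a, b; 0, 1]) (k : ℤ) (h : F) :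
    M ^ k * uu h = uu (a ^ k * h) * M ^ k := by
  obtain ⟨d, hd, -⟩ := M_zpow ha hM k
  apply GL2_ext
  rw [Units.val_mul, Units.val_mul, hd, uu_coe, uu_coe, mulmat, mulmat]
  ring_nf



def Hsub (H : AddSubgroup F) : Subgroup (GL2 F) where
  carrier := {g : GL2 F | ∃ h ∈ H, (g : Matrix (Fin 2) (Fin 2) F) = !![1,h;0,1]}
  one_mem' := ⟨0, H.zero_mem, by rw [Units.val_one, Matrix.one_fin_two]⟩
  mul_mem' := by
    rintro g g' ⟨h, hh, e⟩ ⟨h', hh', e'⟩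
    refine ⟨h' + h, H.add_mem hh' hh, ?_⟩
    rw [Units.val_mul, e, e', mulmat]; ring_nf
  inv_mem' := by
    rintro g ⟨h, hh, e⟩
    have hg : g = uu h := GL2_ext (by rw [e, uu_coe])
    exact ⟨-h, H.neg_mem hh, by rw [hg, uu_inv, uu_coe]⟩

lemma mem_Hsub_uu {H : AddSubgroup F} {h : F} (hh : h ∈ H) : uu h ∈ Hsub H :=
  ⟨h, hh, uu_coe h⟩

def Tgrp (a b : F) (H : AddSubgroup F) (M : GL2 F) (ha : a ≠ 0)
    (hH : ∀ (k : ℤ), ∀ h ∈ H, a ^ k * h ∈ H)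
    (hM : (M : Matrix (Fin 2) (Fin 2) F) = !![a, b; 0, 1]) : Subgroup (GL2 F) where
  carrier := {x : GL2 F | ∃ k : ℤ, ∃ h ∈ H, x = M ^ k * uu h}
  one_mem' := ⟨0, 0, H.zero_mem, by simp⟩
  mul_mem' := by
    rintro x y ⟨k, h, hh, rfl⟩ ⟨j, h', hh', rfl⟩
    refine ⟨k + j, a ^ (-j) * h + h', H.add_mem (hH _ _ hh) hh', ?_⟩
    have e1 : uu h * M ^ j = M ^ j * uu (a ^ (-j) * h) := by
      rw [M_conj ha hM j]
      congr 2
      rw [← mul_assoc, ← zpow_add₀ ha]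
      simp
    have e2 : (M ^ k * uu h) * (M ^ j * uu h') = M ^ k * ((uu h * M ^ j) * uu h') := by
      group
    rw [e2, e1]
    have e3 : M ^ k * ((M ^ j * uu (a ^ (-j) * h)) * uu h')
        = (M ^ k * M ^ j) * (uu (a ^ (-j) * h) * uu h') := by group
    rw [e3, ← _root_.zpow_add, uu_mul]
  inv_mem' := by
    rintro x ⟨k, h, hh, rfl⟩
    refine ⟨-k, a ^ k * (-h), hH _ _ (H.neg_mem hh), ?_⟩
    rw [_root_.mul_inv_rev, uu_inv, ← _root_.zpow_neg, M_conj ha hM]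
    congr 1
    rw [← mul_assoc, ← zpow_add₀ ha]
    simp

lemma M_mem_Sgrp {H : AddSubgroup F} (hM : (M : Matrix (Fin 2) (Fin 2) F) = !![a, b; 0, 1]) :
    M ∈ Sgrp a b H := Subgroup.subset_closure (Or.inl hM)

lemma uu_mem_Sgrp {H : AddSubgroup F} {h : F} (hh : h ∈ H) : uu h ∈ Sgrp a b H :=
  Subgroup.subset_closure (Or.inr ⟨h, hh, uu_coe h⟩)

lemma Sgrp_iff {H : AddSubgroup F} (ha : a ≠ 0)
    (hH : ∀ (k : ℤ), ∀ h ∈ H, a ^ k * h ∈ H)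
    (hM : (M : Matrix (Fin 2) (Fin 2) F) = !![a, b; 0, 1]) (x : GL2 F) :
    x ∈ Sgrp a b H ↔ ∃ k : ℤ, ∃ h ∈ H, x = M ^ k * uu h := by
  constructor
  · intro hx
    have hle : Sgrp a b H ≤ Tgrp a b H M ha hH hM := by
      rw [Sgrp]
      refine (Subgroup.closure_le _).2 ?_
      rintro g (hg | ⟨h, hh, hg⟩)
      · have : g = M := GL2_ext (hg.trans hM.symm)
        exact this ▸ ⟨1, 0, H.zero_mem, by simp⟩
      · have : g = uu h := GL2_ext hg
        exact ⟨0, h, hh, by simp [this]⟩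
    exact hle hx
  · rintro ⟨k, h, hh, rfl⟩
    exact mul_mem (zpow_mem (M_mem_Sgrp hM) k) (uu_mem_Sgrp hh)

end Aux

/-- `S(a,b,H)` is the internal semidirect product `⟨M⟩ ⋉ H̄`, where
`M = [[a,b],[0,1]]` and `H̄ = {[[1,h],[0,1]] : h ∈ H}`; in particular
`|S(a,b,H)| = ord(a)·|H|`. -/
theorem stmt11 (F : Type) [Field F] [Fintype F]
    (a b : F) (H : AddSubgroup F) (hS : memS a b H)
    (M : GL2 F) (hM : (M : Matrix (Fin 2) (Fin 2) F) = !![a, b; 0, 1])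
    (Hbar : Subgroup (GL2 F))
    (hHbar : Hbar = Subgroup.closure
      {g : GL2 F | ∃ h ∈ H, (g : Matrix (Fin 2) (Fin 2) F) = !![1, h; 0, 1]}) :
    Hbar ≤ Sgrp a b H ∧
    (Hbar.subgroupOf (Sgrp a b H)).Normal ∧
    Subgroup.zpowers M ⊓ Hbar = ⊥ ∧
    (∀ x ∈ Sgrp a b H, ∃ m ∈ Subgroup.zpowers M, ∃ k ∈ Hbar, x = m * k) ∧
    Nat.card (Sgrp a b H) = orderOf a * Nat.card H := by
  obtain ⟨ha, hb, hcl⟩ := hS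
  have hAk : ∀ (k : ℤ), ∀ h ∈ H, a ^ k * h ∈ H := fun k h hh =>
    hcl _ (zpow_mem (Subfield.subset_closure (Set.mem_singleton a)) k) h hh
  have hHb : Hbar = Hsub H := by
    rw [hHbar]
    apply le_antisymm
    · exact (Subgroup.closure_le _).2 (fun g hg => hg)
    · intro g hg
      exact Subgroup.subset_closure hg
  have SI := Sgrp_iff (M := M) ha hAk hM
  refine ⟨?_, ?_, ?_, ?_, ?_⟩
  · -- Hbar ≤ Sgrp
    rw [hHbar]
    exact (Subgroup.closure_le _).2 (fun g hg => Subgroup.subset_closure (Or.inr hg))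
  · -- normality
    constructor
    intro n hn g
    rw [Subgroup.mem_subgroupOf, hHb] at hn ⊢
    obtain ⟨h, hh, hn⟩ := hn
    have hnu : (n : GL2 F) = uu h := GL2_ext (by rw [hn, uu_coe])
    obtain ⟨k, h0, hh0, hg⟩ := (SI _).1 g.2
    have key : (g : GL2 F) * (n : GL2 F) * (g : GL2 F)⁻¹ = uu (a ^ k * h) := by
      rw [hg, hnu, _root_.mul_inv_rev, uu_inv]
      have c1 : uu h0 * uu h * uu (-h0) = uu h := by
        rw [uu_mul, uu_mul]; congr 1; ring
      have c2 : M ^ k * uu h0 * uu h * (uu (-h0) * (M ^ k)⁻¹)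
          = M ^ k * (uu h0 * uu h * uu (-h0)) * (M ^ k)⁻¹ := by group
      rw [c2, c1, show M ^ k * uu h * (M ^ k)⁻¹ = (M ^ k * uu h) * (M ^ k)⁻¹ from rfl,
        M_conj ha hM k h, mul_assoc, mul_inv_cancel, mul_one]
    have : ((g * n * g⁻¹ : Sgrp a b H) : GL2 F) = uu (a ^ k * h) := by
      push_cast
      exact key
    exact ⟨a ^ k * h, hAk k h hh, by rw [this, uu_coe]⟩
  · -- trivial intersection
    rw [eq_bot_iff]
    intro x hx
    rw [Subgroup.mem_inf] at hx
    obtain ⟨hx1, hx2⟩ := hx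
    obtain ⟨k, rfl⟩ := Subgroup.mem_zpowers_iff.1 hx1
    rw [hHb] at hx2
    obtain ⟨h, hh, e⟩ := hx2
    obtain ⟨d, hd, -⟩ := M_zpow ha hM k
    have hak : a ^ k = 1 := entry00 (hd.symm.trans e)
    rw [Subgroup.mem_bot]
    exact M_zpow_eq_one ha hb hM hak
  · -- decomposition
    intro x hx
    obtain ⟨k, h, hh, rfl⟩ := (SI x).1 hx
    exact ⟨M ^ k, zpow_mem (Subgroup.mem_zpowers M) k, uu h,
      by rw [hHb]; exact mem_Hsub_uu hh, rfl⟩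
  · -- cardinality
    have hord : orderOf M = orderOf a := by
      rw [orderOf_eq_orderOf_iff]
      intro n
      constructor
      · intro hn
        obtain ⟨d, hd, -⟩ := M_zpow ha hM (n : ℤ)
        rw [zpow_natCast, hn, Units.val_one, Matrix.one_fin_two] at hd
        have h1 : a ^ (n : ℤ) = 1 := entry00 hd.symm
        rwa [zpow_natCast] at h1
      · intro hn
        have : M ^ (n : ℤ) = 1 := M_zpow_eq_one ha hb hM (by rw [zpow_natCast, hn])
        rwa [zpow_natCast] at this
    have hf : Function.Bijective
        (fun p : (Subgroup.zpowers M) × H => (⟨(p.1 : GL2 F) * uu (p.2 : F),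
          (SI _).2 (by
            obtain ⟨k, hk⟩ := Subgroup.mem_zpowers_iff.1 p.1.2
            exact ⟨k, (p.2 : F), p.2.2, by rw [hk]⟩)⟩ : Sgrp a b H)) := by
      constructor
      · rintro ⟨m, h⟩ ⟨m', h'⟩ e
        have e' : (m : GL2 F) * uu (h : F) = (m' : GL2 F) * uu (h' : F) :=
          congrArg Subtype.val e
        obtain ⟨k, hk⟩ := Subgroup.mem_zpowers_iff.1 m.2
        obtain ⟨j, hj⟩ := Subgroup.mem_zpowers_iff.1 m'.2
        rw [← hk, ← hj] at e'
        have e1 : M ^ (k - j) = uu ((h' : F) - (h : F)) := by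
          have h3 : uu ((h' : F) - (h : F)) = uu (h' : F) * (uu (h : F))⁻¹ := by
            rw [uu_inv, uu_mul]; congr 1; ring
          rw [h3]
          calc M ^ (k - j) = (M ^ j)⁻¹ * (M ^ k * uu (h : F)) * (uu (h : F))⁻¹ := by
                group
            _ = (M ^ j)⁻¹ * (M ^ j * uu (h' : F)) * (uu (h : F))⁻¹ := by rw [e']
            _ = uu (h' : F) * (uu (h : F))⁻¹ := by group
        obtain ⟨d, hd, -⟩ := M_zpow ha hM (k - j)
        rw [e1, uu_coe] at hd
        have hone : a ^ (k - j) = 1 := entry00 hd.symm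
        have hMone : M ^ (k - j) = 1 := M_zpow_eq_one ha hb hM hone
        rw [hMone] at e1
        have hhh : (h : F) = (h' : F) :=
          (sub_eq_zero.mp (uu_inj (e1.symm.trans uu_zero.symm))).symm
        have huu : uu (h : F) = uu (h' : F) := by rw [hhh]
        rw [huu] at e'
        have hMkj : M ^ k = M ^ j := mul_right_cancel e'
        have hm : m = m' := Subtype.ext (by rw [← hk, ← hj]; exact hMkj)
        rw [Prod.mk.injEq]
        exact ⟨hm, Subtype.ext hhh⟩
      · rintro ⟨x, hx⟩
        obtain ⟨k, h, hh, rfl⟩ := (SI x).1 hx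
        exact ⟨⟨⟨M ^ k, zpow_mem (Subgroup.mem_zpowers M) k⟩, ⟨h, hh⟩⟩, rfl⟩
    calc Nat.card (Sgrp a b H) = Nat.card ((Subgroup.zpowers M) × H) :=
          (Nat.card_eq_of_bijective _ hf).symm
      _ = Nat.card (Subgroup.zpowers M) * Nat.card H := Nat.card_prod _ _
      _ = orderOf a * Nat.card H := by rw [Nat.card_zpowers, hord]
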